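/- Let Z be a nonempty finite set and let 𝒟 be a family of 4-element subsets of Z such that every element of Z belongs to exactly 3 members of 𝒟 (so 3|Z| = 4|𝒟| and |Z| ≥ 4). Construct the parliamentary election whose running parties are one party p_D for each D ∈ 𝒟 together with 3|Z|+1 additional parties q_1, …, q_{3|Z|+1}, and whose voters are, for each z ∈ Z: one type-1 voter ranking q_1 first, then the three parties p_D with z ∈ D (in some fixed order), then q_2, …, q_{3|Z|+1}, then all remaining parties in some fixed order; and one type-2 voter ranking q_1 first, then q_2, …, q_{3|Z|+1}, then all parties p_D in some fixed order. Let the coalition be C = {p_D : D ∈ 𝒟}, let every voter's price function be s_i(x) = x, and let the electoral threshold be τ = 4/(2|Z|) (so a party is active iff it receives at least 4 votes). Then there exists a subfamily 𝒟' ⊆ 𝒟 whose members are pairwise disjoint and cover Z (an exact cover) if and only if there exists a coalition-shift bribe of total cost at most 3|Z| after which the active-vote fraction of C is at least 1/2. -/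

import Mathlib

open scoped Classical

section Defs

variable {U V : Type*}

/-- `p` is the most-preferred member of the running set `P` under the linear order `L`
(greater means more preferred). -/
def TopOf (L : LinearOrder U) (P : Finset U) (p : U) : Prop :=
  p ∈ P ∧ ∀ q ∈ P, q ≠ p → L.lt q p

/-- Number of voters whose most-preferred running party lies in `A`. -/
noncomputable def votes [Fintype V] (pref : V → LinearOrder U) (P A : Finset U) : ℕ :=
  (Finset.univ.filter fun v : V => ∃ p ∈ A, TopOf (pref v) P p).card

/-- Fraction of voters whose most-preferred running party lies in `A`. -/
noncomputable def voteFrac [Fintype V] (pref : V → LinearOrder U) (P A : Finset U) : ℚ :=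
  (votes pref P A : ℚ) / (Fintype.card V : ℚ)

/-- Total number of votes received by active parties (receiving at least `T` votes) among `A`. -/
noncomputable def activeVotes [Fintype V] (pref : V → LinearOrder U) (P : Finset U) (T : ℕ)
    (A : Finset U) : ℕ :=
  ∑ p ∈ A, if T ≤ votes pref P {p} then votes pref P {p} else 0

/-- Active-vote fraction of `A`. -/
noncomputable def activeFrac [Fintype V] (pref : V → LinearOrder U) (P : Finset U) (T : ℕ)
    (A : Finset U) : ℚ :=
  (activeVotes pref P T A : ℚ) / (activeVotes pref P T P : ℚ)

/-- The linear order `L` respects the tier function `t` (smaller tier = more preferred). -/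
def PrefTiers (L : LinearOrder U) (t : U → ℕ) : Prop :=
  ∀ a b : U, t a < t b → L.lt b a

/-- Pairs `(p, q)` with `p ≻ q` under `L` and `q ≻ p` under `L'`. -/
noncomputable def invPairs [Fintype U] (L L' : LinearOrder U) : Finset (U × U) :=
  Finset.univ.filter fun pq : U × U => L.lt pq.2 pq.1 ∧ L'.lt pq.1 pq.2

/-- Swap-bribery cost of replacing `L` by `L'` with swap-price function `sw`. -/
noncomputable def swapCost [Fintype U] (L L' : LinearOrder U) (sw : U → U → ℝ) : ℝ :=
  ∑ pq ∈ invPairs L L', sw pq.1 pq.2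

end Defs

section MyHelpers
variable {U V : Type*}

lemma lt_asymm' (L : LinearOrder U) {a b : U} (h : L.lt a b) : ¬ L.lt b a := by
  letI := L; exact lt_asymm h

lemma lt_ne' (L : LinearOrder U) {a b : U} (h : L.lt a b) : a ≠ b := by
  letI := L; exact ne_of_lt h

lemma topOf_unique (L : LinearOrder U) {P : Finset U} {p p' : U}
    (h : TopOf L P p) (h' : TopOf L P p') : p = p' := by
  by_contra hne
  exact lt_asymm' L (h.2 p' h'.1 (Ne.symm hne)) (h'.2 p h.1 hne)

lemma exists_topOf (L : LinearOrder U) {P : Finset U} (hP : P.Nonempty) :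
    ∃ p, TopOf L P p := by
  letI := L
  obtain ⟨p, hp, hmax⟩ := P.exists_max_image id hP
  exact ⟨p, hp, fun q hq hne => lt_of_le_of_ne (hmax q hq) hne⟩

lemma votes_top [Fintype V] (pref : V → LinearOrder U) (P : Finset U) (tp : V → U)
    (htp : ∀ v, TopOf (pref v) P (tp v)) (p : U) :
    votes pref P {p} = (Finset.univ.filter fun v => tp v = p).card := by
  unfold votes
  congr 1
  apply Finset.filter_congr
  intro v _
  simp only [Finset.mem_singleton]
  constructor
  · rintro ⟨q, rfl, hq⟩
    exact topOf_unique (pref v) (htp v) hq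
  · rintro rfl
    exact ⟨tp v, rfl, htp v⟩

lemma invPairs_self [Fintype U] (L : LinearOrder U) : invPairs L L = ∅ := by
  ext pq
  simp only [invPairs, Finset.mem_filter, Finset.mem_univ, true_and, Finset.notMem_empty,
    iff_false, not_and]
  exact fun h => lt_asymm' L h

noncomputable def moveToTop (L : LinearOrder U) (t : U) : LinearOrder U :=
  letI := L
  LinearOrder.lift' (fun a => (toLex (decide (a = t), a) : Lex (Bool × U)))
    (fun a b h => by
      have := congrArg (fun x => (ofLex x).2) h
      simpa using this)

lemma moveToTop_lt (L : LinearOrder U) (t : U) (a b : U) :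
    (moveToTop L t).lt a b ↔ ((b = t ∧ a ≠ t) ∨ ((a = t ↔ b = t) ∧ L.lt a b)) := by
  letI := L
  show (toLex (decide (a = t), a) : Lex (Bool × U)) < toLex (decide (b = t), b) ↔ _
  rw [Prod.Lex.lt_iff]
  simp only [ofLex_toLex, Bool.lt_iff, decide_eq_true_eq, decide_eq_false_iff_not, decide_eq_decide]
  constructor
  · rintro (⟨h1, h2⟩ | ⟨h1, h2⟩)
    · exact Or.inl ⟨h2, h1⟩
    · exact Or.inr ⟨by rw [h1], h2⟩
  · rintro (⟨h1, h2⟩ | ⟨h1, h2⟩)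
    · exact Or.inl ⟨h2, h1⟩
    · exact Or.inr ⟨h1, h2⟩

lemma invPairs_moveToTop_subset [Fintype U] (L : LinearOrder U) (t : U) :
    invPairs L (moveToTop L t) ⊆ (Finset.univ.filter fun a => L.lt t a) ×ˢ {t} := by
  intro pq h
  simp only [invPairs, Finset.mem_filter, Finset.mem_univ, true_and] at h
  obtain ⟨h1, h2⟩ := h
  rw [moveToTop_lt] at h2
  rcases h2 with ⟨hb, _⟩ | ⟨_, hlt⟩
  · rw [Finset.mem_product, Finset.mem_filter, Finset.mem_singleton]
    subst hb
    exact ⟨⟨Finset.mem_univ _, h1⟩, rfl⟩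
  · exact absurd h1 (lt_asymm' L hlt)

lemma card_filter_sum {α β : Type*} [Fintype α] [Fintype β] (q : α ⊕ β → Prop)
    [DecidablePred q] :
    (Finset.univ.filter q).card
      = (Finset.univ.filter fun a : α => q (Sum.inl a)).card
        + (Finset.univ.filter fun b : β => q (Sum.inr b)).card := by
  have hd : Disjoint ((Finset.univ.filter fun a : α => q (Sum.inl a)).image (Sum.inl : α → α ⊕ β))
      ((Finset.univ.filter fun b : β => q (Sum.inr b)).image (Sum.inr : β → α ⊕ β)) := by
    refine Finset.disjoint_left.mpr ?_
    rintro x hx hy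
    simp only [Finset.mem_image] at hx hy
    obtain ⟨a, _, rfl⟩ := hx
    obtain ⟨b, _, h⟩ := hy
    exact Sum.inr_ne_inl h
  have h1 : ((Finset.univ.filter fun a : α => q (Sum.inl a)).image (Sum.inl : α → α ⊕ β)).card
      = (Finset.univ.filter fun a : α => q (Sum.inl a)).card :=
    Finset.card_image_of_injective _ Sum.inl_injective
  have h2 : ((Finset.univ.filter fun b : β => q (Sum.inr b)).image (Sum.inr : β → α ⊕ β)).card
      = (Finset.univ.filter fun b : β => q (Sum.inr b)).card :=
    Finset.card_image_of_injective _ Sum.inr_injective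
  have hu : Finset.univ.filter q
      = (Finset.univ.filter fun a : α => q (Sum.inl a)).image (Sum.inl : α → α ⊕ β)
        ∪ (Finset.univ.filter fun b : β => q (Sum.inr b)).image (Sum.inr : β → α ⊕ β) := by
    ext x
    cases x <;> simp
  rw [hu, Finset.card_union_of_disjoint hd, h1, h2]

lemma card_filter_sum' {α β : Type*} [Fintype α] [Fintype β] (q : α ⊕ β → Prop)
    {dq : DecidablePred q} (qa : α → Prop) (qb : β → Prop) [DecidablePred qa] [DecidablePred qb]
    (ha : ∀ a, q (Sum.inl a) ↔ qa a) (hb : ∀ b, q (Sum.inr b) ↔ qb b) :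
    (@Finset.filter _ q dq Finset.univ).card
      = (Finset.univ.filter qa).card + (Finset.univ.filter qb).card := by
  rw [@card_filter_sum α β _ _ q dq]
  congr 1
  · exact congrArg Finset.card (Finset.filter_congr fun x _ => ha x)
  · exact congrArg Finset.card (Finset.filter_congr fun x _ => hb x)

end MyHelpers

/-- Coalition-shift bribery reduction from 3-4-Exact-Cover.  Parties:
one party $p_D$ (= `Sum.inl D`) per $D ∈ 𝒟$ and parties $q_1,…,q_{3|Z|+1}$
(= `Sum.inr j`); voters: per $z ∈ Z$, a type-1 voter (`Sum.inl z`) ranking $q_1$ first,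
then the three $p_D$ with $z ∈ D$, then $q_2,…,q_{3|Z|+1}$, then the rest, and a type-2
voter (`Sum.inr z`) ranking $q_1$ first, then $q_2,…,q_{3|Z|+1}$, then the rest.  The
coalition is $\{p_D : D ∈ 𝒟\}$, each price function is $s_i(x)=x$, a party is active iff
it gets at least $4$ votes.  Then an exact cover exists iff there is a coalition-shift
bribe of total cost at most $3|Z|$ after which the coalition's active-vote fraction is at
least $1/2$. -/
theorem coalition_shift_exact_cover_reduction
    {Z : Type*} [Fintype Z] [DecidableEq Z] [Nonempty Z]
    (𝒟 : Finset (Finset Z))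
    (h4 : ∀ D ∈ 𝒟, D.card = 4)
    (h3 : ∀ z : Z, (𝒟.filter fun D => z ∈ D).card = 3)
    (pref : Z ⊕ Z → LinearOrder (Finset Z ⊕ Fin (3 * Fintype.card Z + 1)))
    (hpref1 : ∀ z : Z, PrefTiers (pref (Sum.inl z))
      (Sum.elim (fun D => if D ∈ 𝒟 ∧ z ∈ D then (1 : ℕ) else 3)
        (fun j => if j = 0 then 0 else 2)))
    (hpref2 : ∀ z : Z, PrefTiers (pref (Sum.inr z))
      (Sum.elim (fun _ => (2 : ℕ)) (fun j => if j = 0 then 0 else 1))) :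
    (∃ 𝒟' ⊆ 𝒟, (∀ D1 ∈ 𝒟', ∀ D2 ∈ 𝒟', D1 ≠ D2 → Disjoint D1 D2) ∧
        ∀ z : Z, ∃ D ∈ 𝒟', z ∈ D) ↔
    (∃ pref' : Z ⊕ Z → LinearOrder (Finset Z ⊕ Fin (3 * Fintype.card Z + 1)),
      (∀ (v : Z ⊕ Z) (p q : Finset Z ⊕ Fin (3 * Fintype.card Z + 1)),
        (pref v).lt q p → (pref' v).lt p q → q ∈ 𝒟.image Sum.inl) ∧
      (∑ v : Z ⊕ Z, (invPairs (pref v) (pref' v)).card) ≤ 3 * Fintype.card Z ∧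
      (1 : ℚ) / 2 ≤
        activeFrac pref' (𝒟.image Sum.inl ∪ Finset.univ.image Sum.inr) 4
          (𝒟.image Sum.inl)) := by
  classical
  set C : Finset (Finset Z ⊕ Fin (3 * Fintype.card Z + 1)) := 𝒟.image Sum.inl with hCdef
  set R : Finset (Finset Z ⊕ Fin (3 * Fintype.card Z + 1)) :=
    Finset.univ.image Sum.inr with hRdef
  set P : Finset (Finset Z ⊕ Fin (3 * Fintype.card Z + 1)) := C ∪ R with hPdef
  have hn4 : 4 ≤ Fintype.card Z := by
    obtain ⟨z0⟩ := ‹Nonempty Z›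
    have hne : (𝒟.filter fun D => z0 ∈ D).Nonempty := by
      rw [← Finset.card_pos, h3 z0]; norm_num
    obtain ⟨D, hD⟩ := hne
    rw [Finset.mem_filter] at hD
    calc 4 = D.card := (h4 D hD.1).symm
      _ ≤ Fintype.card Z := le_trans (Finset.card_le_univ D) (le_of_eq Finset.card_univ)
  have hinr0P : (Sum.inr 0 : Finset Z ⊕ Fin (3 * Fintype.card Z + 1)) ∈ P :=
    Finset.mem_union_right _ (Finset.mem_image_of_mem _ (Finset.mem_univ _))
  have hPne : P.Nonempty := ⟨_, hinr0P⟩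
  have hmemC : ∀ D ∈ 𝒟, (Sum.inl D : Finset Z ⊕ Fin (3 * Fintype.card Z + 1)) ∈ P :=
    fun D hD => Finset.mem_union_left _ (Finset.mem_image_of_mem _ hD)
  have hdisjCR : Disjoint C R := by
    refine Finset.disjoint_left.mpr ?_
    rintro x hx hy
    rw [hCdef, Finset.mem_image] at hx
    rw [hRdef, Finset.mem_image] at hy
    obtain ⟨a, _, rfl⟩ := hx
    obtain ⟨b, _, h⟩ := hy
    exact Sum.inr_ne_inl h
  -- original top is q0 for every voter
  have htop0 : ∀ v : Z ⊕ Z, TopOf (pref v) P (Sum.inr 0) := by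
    intro v
    refine ⟨hinr0P, fun q _ hne => ?_⟩
    cases v with
    | inl z =>
      cases q with
      | inl D =>
        apply hpref1 z (Sum.inr 0) (Sum.inl D)
        simp only [Sum.elim_inl, Sum.elim_inr]
        split_ifs <;> simp_all
      | inr j =>
        have hj : j ≠ 0 := fun h => hne (by rw [h])
        apply hpref1 z (Sum.inr 0) (Sum.inr j)
        simp only [Sum.elim_inr]
        split_ifs <;> simp_all
    | inr z =>
      cases q with
      | inl D =>
        apply hpref2 z (Sum.inr 0) (Sum.inl D)
        simp only [Sum.elim_inl, Sum.elim_inr]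
        split_ifs <;> simp_all
      | inr j =>
        have hj : j ≠ 0 := fun h => hne (by rw [h])
        apply hpref2 z (Sum.inr 0) (Sum.inr j)
        simp only [Sum.elim_inr]
        split_ifs <;> simp_all
  constructor
  · -- exact cover ⇒ cheap successful bribe
    rintro ⟨𝒟', hsub, hdisj, hcover⟩
    choose Dz hDz hzDz using hcover
    refine ⟨Sum.elim (fun z => moveToTop (pref (Sum.inl z)) (Sum.inl (Dz z)))
        (fun z => pref (Sum.inr z)), ?_, ?_, ?_⟩
    · -- only coalition parties are promoted
      intro v p q hqp hpq
      cases v with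
      | inl z =>
        have hpq' : (moveToTop (pref (Sum.inl z)) (Sum.inl (Dz z))).lt p q := hpq
        rw [moveToTop_lt] at hpq'
        rcases hpq' with ⟨hq, _⟩ | ⟨_, hlt⟩
        · exact Finset.mem_image.mpr ⟨Dz z, hsub (hDz z), hq.symm⟩
        · exact absurd hlt (lt_asymm' _ hqp)
      | inr z =>
        exact absurd (show (pref (Sum.inr z)).lt p q from hpq) (lt_asymm' _ hqp)
    · -- total cost at most 3|Z|
      rw [Fintype.sum_sum_type]
      have h2 : ∀ z : Z,
          (invPairs (pref (Sum.inr z))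
            ((Sum.elim (fun z => moveToTop (pref (Sum.inl z)) (Sum.inl (Dz z)))
              (fun z => pref (Sum.inr z))) (Sum.inr z))).card = 0 := by
        intro z
        rw [show (Sum.elim (fun z => moveToTop (pref (Sum.inl z)) (Sum.inl (Dz z)))
              (fun z => pref (Sum.inr z))) (Sum.inr z) = pref (Sum.inr z) from rfl,
          invPairs_self]
        rfl
      have h1 : ∀ z : Z,
          (invPairs (pref (Sum.inl z))
            ((Sum.elim (fun z => moveToTop (pref (Sum.inl z)) (Sum.inl (Dz z)))
              (fun z => pref (Sum.inr z))) (Sum.inl z))).card ≤ 3 := by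
        intro z
        show (invPairs (pref (Sum.inl z))
          (moveToTop (pref (Sum.inl z)) (Sum.inl (Dz z)))).card ≤ 3
        have hsub1 := invPairs_moveToTop_subset (pref (Sum.inl z)) (Sum.inl (Dz z))
        have hc1 := Finset.card_le_card hsub1
        rw [Finset.card_product, Finset.card_singleton, mul_one] at hc1
        have htin : (Sum.inl (Dz z) : Finset Z ⊕ Fin (3 * Fintype.card Z + 1)) ∈
            insert (Sum.inr 0 : Finset Z ⊕ Fin (3 * Fintype.card Z + 1))
              ((𝒟.filter fun D => z ∈ D).image Sum.inl) :=
          Finset.mem_insert_of_mem (Finset.mem_image_of_mem _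
            (Finset.mem_filter.mpr ⟨hsub (hDz z), hzDz z⟩))
        have hS : (Finset.univ.filter fun a => (pref (Sum.inl z)).lt (Sum.inl (Dz z)) a) ⊆
            (insert (Sum.inr 0 : Finset Z ⊕ Fin (3 * Fintype.card Z + 1))
              ((𝒟.filter fun D => z ∈ D).image Sum.inl)).erase (Sum.inl (Dz z)) := by
          intro a ha
          rw [Finset.mem_filter] at ha
          obtain ⟨-, hlt⟩ := ha
          rw [Finset.mem_erase]
          refine ⟨(lt_ne' _ hlt).symm, ?_⟩
          cases a with
          | inr j =>
            by_cases hj : j = 0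
            · subst hj; exact Finset.mem_insert_self _ _
            · exfalso
              have hcond : Dz z ∈ 𝒟 ∧ z ∈ Dz z := ⟨hsub (hDz z), hzDz z⟩
              refine lt_asymm' _ hlt (hpref1 z (Sum.inl (Dz z)) (Sum.inr j) ?_)
              simp only [Sum.elim_inl, Sum.elim_inr]
              split_ifs <;> simp_all
          | inl D =>
            by_cases hD : D ∈ 𝒟 ∧ z ∈ D
            · exact Finset.mem_insert_of_mem (Finset.mem_image_of_mem _
                (Finset.mem_filter.mpr hD))
            · exfalso
              have hcond : Dz z ∈ 𝒟 ∧ z ∈ Dz z := ⟨hsub (hDz z), hzDz z⟩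
              refine lt_asymm' _ hlt (hpref1 z (Sum.inl (Dz z)) (Sum.inl D) ?_)
              simp only [Sum.elim_inl]
              split_ifs <;> simp_all
        have hc2 := Finset.card_le_card hS
        have hc3 := Finset.card_erase_of_mem htin
        have hc4 := Finset.card_insert_le (Sum.inr 0 : Finset Z ⊕ Fin (3 * Fintype.card Z + 1))
          ((𝒟.filter fun D => z ∈ D).image Sum.inl)
        have hc5 : ((𝒟.filter fun D => z ∈ D).image
            (Sum.inl : Finset Z → Finset Z ⊕ Fin (3 * Fintype.card Z + 1))).card = 3 := by
          rw [Finset.card_image_of_injective _ Sum.inl_injective, h3 z]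
        omega
      have hs1 : ∑ z : Z,
          (invPairs (pref (Sum.inl z))
            ((Sum.elim (fun z => moveToTop (pref (Sum.inl z)) (Sum.inl (Dz z)))
              (fun z => pref (Sum.inr z))) (Sum.inl z))).card ≤ 3 * Fintype.card Z := by
        calc _ ≤ ∑ _z : Z, 3 := Finset.sum_le_sum fun z _ => h1 z
          _ = 3 * Fintype.card Z := by
            rw [Finset.sum_const, Finset.card_univ, smul_eq_mul, mul_comm]
      have hs2 : ∑ z : Z,
          (invPairs (pref (Sum.inr z))
            ((Sum.elim (fun z => moveToTop (pref (Sum.inl z)) (Sum.inl (Dz z)))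
              (fun z => pref (Sum.inr z))) (Sum.inr z))).card = 0 :=
        Finset.sum_eq_zero fun z _ => h2 z
      omega
    · -- active-vote fraction reaches 1/2
      set pref' : Z ⊕ Z → LinearOrder (Finset Z ⊕ Fin (3 * Fintype.card Z + 1)) :=
        Sum.elim (fun z => moveToTop (pref (Sum.inl z)) (Sum.inl (Dz z)))
          (fun z => pref (Sum.inr z)) with hpref'def
      set tp : Z ⊕ Z → Finset Z ⊕ Fin (3 * Fintype.card Z + 1) :=
        Sum.elim (fun z => Sum.inl (Dz z)) (fun _ => Sum.inr 0) with htpdef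
      have htp : ∀ v, TopOf (pref' v) P (tp v) := by
        intro v
        cases v with
        | inl z =>
          refine ⟨hmemC _ (hsub (hDz z)), fun q _ hne => ?_⟩
          show (moveToTop (pref (Sum.inl z)) (Sum.inl (Dz z))).lt q (Sum.inl (Dz z))
          rw [moveToTop_lt]
          exact Or.inl ⟨rfl, hne⟩
        | inr z => exact htop0 (Sum.inr z)
      have hv0 : votes pref' P {(Sum.inr 0 : Finset Z ⊕ Fin (3 * Fintype.card Z + 1))}
          = Fintype.card Z := by
        rw [votes_top pref' P tp htp, card_filter_sum]
        simp [htpdef]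
      have hvD : ∀ D ∈ 𝒟', votes pref' P
          {(Sum.inl D : Finset Z ⊕ Fin (3 * Fintype.card Z + 1))} = 4 := by
        intro D hD'
        rw [votes_top pref' P tp htp, card_filter_sum]
        have e1 : (Finset.univ.filter fun z : Z => Dz z = D) = D := by
          ext z
          simp only [Finset.mem_filter, Finset.mem_univ, true_and]
          constructor
          · rintro rfl; exact hzDz z
          · intro hz
            by_contra hne
            exact Finset.disjoint_left.mp (hdisj (Dz z) (hDz z) D hD' hne) (hzDz z) hz
        simp only [htpdef, Sum.elim_inl, Sum.elim_inr, Sum.inl.injEq]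
        simp only [e1]
        simp [h4 D (hsub hD')]
      have hvD' : ∀ D ∈ 𝒟, D ∉ 𝒟' → votes pref' P
          {(Sum.inl D : Finset Z ⊕ Fin (3 * Fintype.card Z + 1))} = 0 := by
        intro D _ hD'
        rw [votes_top pref' P tp htp, card_filter_sum]
        have e1 : (Finset.univ.filter fun z : Z => Dz z = D) = ∅ := by
          rw [Finset.filter_eq_empty_iff]
          intro z _ h
          exact hD' (h ▸ hDz z)
        simp only [htpdef, Sum.elim_inl, Sum.elim_inr, Sum.inl.injEq]
        simp only [e1]
        simp
      have hvinr : ∀ j : Fin (3 * Fintype.card Z + 1), j ≠ 0 →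
          votes pref' P {(Sum.inr j : Finset Z ⊕ Fin (3 * Fintype.card Z + 1))} = 0 := by
        intro j hj
        rw [votes_top pref' P tp htp, card_filter_sum]
        simp only [htpdef, Sum.elim_inl, Sum.elim_inr]
        simp
        intro h
        exact absurd h.symm hj
      have hcard𝒟' : 𝒟'.card * 4 = Fintype.card Z := by
        have huniv : 𝒟'.biUnion id = Finset.univ :=
          Finset.eq_univ_iff_forall.mpr fun z =>
            Finset.mem_biUnion.mpr ⟨Dz z, hDz z, hzDz z⟩
        calc 𝒟'.card * 4 = ∑ _D ∈ 𝒟', 4 := by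
              rw [Finset.sum_const, smul_eq_mul]
          _ = ∑ D ∈ 𝒟', (id D).card :=
              Finset.sum_congr rfl fun D hD => (h4 D (hsub hD)).symm
          _ = (𝒟'.biUnion id).card := (Finset.card_biUnion hdisj).symm
          _ = Fintype.card Z := by rw [huniv, Finset.card_univ]
      have haC : activeVotes pref' P 4 C = Fintype.card Z := by
        unfold activeVotes
        rw [hCdef, Finset.sum_image (fun x _ y _ h => Sum.inl_injective h)]
        calc (∑ D ∈ 𝒟, if 4 ≤ votes pref' P {Sum.inl D} then votes pref' P {Sum.inl D} else 0)
            = ∑ D ∈ 𝒟, if D ∈ 𝒟' then 4 else 0 := by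
              refine Finset.sum_congr rfl fun D hD => ?_
              by_cases hD' : D ∈ 𝒟'
              · rw [hvD D hD', if_pos (by norm_num), if_pos hD']
              · rw [hvD' D hD hD', if_neg (by norm_num), if_neg hD']
          _ = ∑ _D ∈ 𝒟 ∩ 𝒟', 4 := Finset.sum_ite_mem _ _ _
          _ = Fintype.card Z := by
              rw [Finset.inter_eq_right.mpr hsub, Finset.sum_const, smul_eq_mul, hcard𝒟']
      have haR : activeVotes pref' P 4 R = Fintype.card Z := by
        unfold activeVotes
        rw [hRdef, Finset.sum_image (fun x _ y _ h => Sum.inr_injective h)]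
        rw [Finset.sum_eq_single (0 : Fin (3 * Fintype.card Z + 1))]
        · rw [hv0, if_pos hn4]
        · intro j _ hj
          rw [hvinr j hj, if_neg (by norm_num)]
        · intro h
          exact absurd (Finset.mem_univ _) h
      have haP : activeVotes pref' P 4 P
          = activeVotes pref' P 4 C + activeVotes pref' P 4 R := by
        unfold activeVotes
        rw [hPdef]
        exact Finset.sum_union hdisjCR
      unfold activeFrac
      rw [haC, haP, haC, haR]
      have hpos : (0 : ℚ) < (Fintype.card Z : ℚ) + (Fintype.card Z : ℚ) := by
        have : (4 : ℚ) ≤ (Fintype.card Z : ℚ) := by exact_mod_cast hn4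
        linarith
      rw [Nat.cast_add, div_le_div_iff₀ (by norm_num) hpos]
      ring_nf
      linarith
  · -- successful cheap bribe ⇒ exact cover
    rintro ⟨pref', hCcond, hbud, hfrac⟩
    have hbudv : ∀ v : Z ⊕ Z,
        (invPairs (pref v) (pref' v)).card ≤ 3 * Fintype.card Z := fun v =>
      le_trans (Finset.single_le_sum
        (f := fun v => (invPairs (pref v) (pref' v)).card)
        (fun _ _ => Nat.zero_le _) (Finset.mem_univ v)) hbud
    choose tp htp using fun v : Z ⊕ Z => exists_topOf (pref' v) hPne
    have hexp : ∀ (v : Z ⊕ Z) (D : Finset Z), tp v = Sum.inl D →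
        (∀ j : Fin (3 * Fintype.card Z + 1),
          (pref v).lt (Sum.inl D) (Sum.inr j)) → False := by
      intro v D htpv hlt
      have hsubset : (Finset.univ.image fun j : Fin (3 * Fintype.card Z + 1) =>
          ((Sum.inr j : Finset Z ⊕ Fin (3 * Fintype.card Z + 1)), (Sum.inl D : Finset Z ⊕ Fin (3 * Fintype.card Z + 1))))
          ⊆ invPairs (pref v) (pref' v) := by
        intro x hx
        simp only [Finset.mem_image, Finset.mem_univ, true_and] at hx
        obtain ⟨j, rfl⟩ := hx
        simp only [invPairs, Finset.mem_filter, Finset.mem_univ, true_and]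
        refine ⟨hlt j, ?_⟩
        have h := (htp v).2 (Sum.inr j)
          (Finset.mem_union_right _ (Finset.mem_image_of_mem _ (Finset.mem_univ _)))
          (by rw [htpv]; simp)
        rw [htpv] at h
        exact h
      have hcard : (Finset.univ.image fun j : Fin (3 * Fintype.card Z + 1) =>
          ((Sum.inr j : Finset Z ⊕ Fin (3 * Fintype.card Z + 1)), (Sum.inl D : Finset Z ⊕ Fin (3 * Fintype.card Z + 1)))).card
          = 3 * Fintype.card Z + 1 := by
        rw [Finset.card_image_of_injective _ fun a b h => by
          simpa using congrArg Prod.fst h]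
        simp
      have hc := Finset.card_le_card hsubset
      have hb := hbudv v
      omega
    have hnotinrj : ∀ (v : Z ⊕ Z) (j : Fin (3 * Fintype.card Z + 1)),
        tp v = Sum.inr j → (pref v).lt (Sum.inr j) (Sum.inr 0) → False := by
      intro v j htpv hlt0
      have hne : (Sum.inr 0 : Finset Z ⊕ Fin (3 * Fintype.card Z + 1)) ≠ Sum.inr j :=
        fun h => lt_ne' _ hlt0 h.symm
      have h' := (htp v).2 (Sum.inr 0) hinr0P (by rw [htpv]; exact hne)
      rw [htpv] at h'
      have hmem := hCcond v (Sum.inr 0) (Sum.inr j) hlt0 h'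
      rw [Finset.mem_image] at hmem
      obtain ⟨D, _, hD⟩ := hmem
      exact Sum.inl_ne_inr hD
    have htp2 : ∀ z : Z, tp (Sum.inr z) = Sum.inr 0 := by
      intro z
      rcases Finset.mem_union.mp (htp (Sum.inr z)).1 with h | h
      · rw [hCdef, Finset.mem_image] at h
        obtain ⟨D, _, hDe⟩ := h
        exfalso
        refine hexp _ D hDe.symm fun j => ?_
        apply hpref2 z (Sum.inr j) (Sum.inl D)
        simp only [Sum.elim_inl, Sum.elim_inr]
        split_ifs <;> omega
      · rw [hRdef, Finset.mem_image] at h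
        obtain ⟨j, _, hje⟩ := h
        by_cases hj : j = 0
        · rw [← hje, hj]
        · exfalso
          refine hnotinrj _ j hje.symm ?_
          apply hpref2 z (Sum.inr 0) (Sum.inr j)
          simp only [Sum.elim_inr]
          simp only [if_true, if_neg hj]
          omega
    have htp1 : ∀ z : Z, tp (Sum.inl z) = Sum.inr 0 ∨
        ∃ D, D ∈ 𝒟 ∧ z ∈ D ∧ tp (Sum.inl z) = Sum.inl D := by
      intro z
      rcases Finset.mem_union.mp (htp (Sum.inl z)).1 with h | h
      · rw [hCdef, Finset.mem_image] at h
        obtain ⟨D, hD, hDe⟩ := h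
        by_cases hzD : z ∈ D
        · exact Or.inr ⟨D, hD, hzD, hDe.symm⟩
        · exfalso
          refine hexp _ D hDe.symm fun j => ?_
          apply hpref1 z (Sum.inr j) (Sum.inl D)
          simp only [Sum.elim_inl, Sum.elim_inr]
          rw [if_neg (fun h : D ∈ 𝒟 ∧ z ∈ D => hzD h.2)]
          split_ifs <;> omega
      · rw [hRdef, Finset.mem_image] at h
        obtain ⟨j, _, hje⟩ := h
        by_cases hj : j = 0
        · rw [← hje, hj]; exact Or.inl rfl
        · exfalso
          refine hnotinrj _ j hje.symm ?_
          apply hpref1 z (Sum.inr 0) (Sum.inr j)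
          simp only [Sum.elim_inr]
          simp only [if_true, if_neg hj]
          omega
    have hv0 : Fintype.card Z ≤ votes pref' P
        {(Sum.inr 0 : Finset Z ⊕ Fin (3 * Fintype.card Z + 1))} := by
      rw [votes_top pref' P tp htp,
        card_filter_sum' _ (fun z : Z => tp (Sum.inl z) = Sum.inr 0)
          (fun z : Z => tp (Sum.inr z) = Sum.inr 0) (fun a => Iff.rfl) (fun b => Iff.rfl)]
      have e2 : (Finset.univ.filter fun z : Z => tp (Sum.inr z) = Sum.inr 0)
          = Finset.univ := by
        rw [Finset.filter_eq_self]
        exact fun z _ => htp2 z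
      simp only [e2, Finset.card_univ]
      omega
    have hactive0 : 4 ≤ votes pref' P
        {(Sum.inr 0 : Finset Z ⊕ Fin (3 * Fintype.card Z + 1))} := le_trans hn4 hv0
    have hvDsub : ∀ D : Finset Z,
        (Finset.univ.filter fun z : Z => tp (Sum.inl z) = Sum.inl D) ⊆ D := by
      intro D z hz
      rw [Finset.mem_filter] at hz
      rcases htp1 z with h | ⟨D', hD', hzD', he⟩
      · exact absurd (hz.2.symm.trans h) Sum.inl_ne_inr
      · obtain rfl : D' = D := Sum.inl_injective (he.symm.trans hz.2)
        exact hzD'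
    have hvD : ∀ D : Finset Z, votes pref' P
        {(Sum.inl D : Finset Z ⊕ Fin (3 * Fintype.card Z + 1))}
        = (Finset.univ.filter fun z : Z => tp (Sum.inl z) = Sum.inl D).card := by
      intro D
      rw [votes_top pref' P tp htp,
        card_filter_sum' _ (fun z : Z => tp (Sum.inl z) = Sum.inl D)
          (fun z : Z => tp (Sum.inr z) = Sum.inl D) (fun a => Iff.rfl) (fun b => Iff.rfl)]
      have e2 : (Finset.univ.filter fun z : Z => tp (Sum.inr z) = Sum.inl D) = ∅ := by
        rw [Finset.filter_eq_empty_iff]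
        intro z _
        rw [htp2 z]
        simp
      simp only [e2, Finset.card_empty, add_zero]
    set A := 𝒟.filter fun D => 4 ≤ votes pref' P
      {(Sum.inl D : Finset Z ⊕ Fin (3 * Fintype.card Z + 1))} with hAdef
    have hAeq : ∀ D ∈ A, (Finset.univ.filter fun z : Z => tp (Sum.inl z) = Sum.inl D) = D := by
      intro D hD
      rw [hAdef, Finset.mem_filter] at hD
      refine Finset.eq_of_subset_of_card_le (hvDsub D) ?_
      rw [h4 D hD.1]
      have h := hD.2
      rw [hvD D] at h
      exact h
    have hAdisj : ∀ D1 ∈ A, ∀ D2 ∈ A, D1 ≠ D2 → Disjoint D1 D2 := by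
      intro D1 h1 D2 h2 hne
      rw [Finset.disjoint_left]
      intro z hz1 hz2
      rw [← hAeq D1 h1, Finset.mem_filter] at hz1
      rw [← hAeq D2 h2, Finset.mem_filter] at hz2
      exact hne (Sum.inl_injective (hz1.2.symm.trans hz2.2))
    have haC : activeVotes pref' P 4 C = ∑ D ∈ A, D.card := by
      have key : ∑ D ∈ A, D.card = ∑ D ∈ 𝒟,
          if 4 ≤ votes pref' P {(Sum.inl D : Finset Z ⊕ Fin (3 * Fintype.card Z + 1))}
          then votes pref' P {(Sum.inl D : Finset Z ⊕ Fin (3 * Fintype.card Z + 1))}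
          else 0 := by
        rw [hAdef, Finset.sum_filter]
        refine Finset.sum_congr rfl fun D hD => ?_
        by_cases h : 4 ≤ votes pref' P
            {(Sum.inl D : Finset Z ⊕ Fin (3 * Fintype.card Z + 1))}
        · have hDA : D ∈ A := by
            rw [hAdef]
            exact Finset.mem_filter.mpr ⟨hD, h⟩
          rw [if_pos h, if_pos h, hvD D, hAeq D hDA]
        · rw [if_neg h, if_neg h]
      unfold activeVotes
      rw [hCdef, Finset.sum_image (fun x _ y _ h => Sum.inl_injective h)]
      exact key.symm
    have haR : Fintype.card Z ≤ activeVotes pref' P 4 R := by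
      have hmem : (Sum.inr 0 : Finset Z ⊕ Fin (3 * Fintype.card Z + 1)) ∈ R :=
        Finset.mem_image_of_mem _ (Finset.mem_univ _)
      have h := Finset.single_le_sum (s := R)
        (f := fun p => if 4 ≤ votes pref' P {p} then votes pref' P {p} else 0)
        (fun p _ => Nat.zero_le _) hmem
      have h2 : votes pref' P {(Sum.inr 0 : Finset Z ⊕ Fin (3 * Fintype.card Z + 1))}
          ≤ ∑ p ∈ R, if 4 ≤ votes pref' P {p} then votes pref' P {p} else 0 := by
        calc votes pref' P {(Sum.inr 0 : Finset Z ⊕ Fin (3 * Fintype.card Z + 1))}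
            = if 4 ≤ votes pref' P {(Sum.inr 0 : Finset Z ⊕ Fin (3 * Fintype.card Z + 1))}
              then votes pref' P {(Sum.inr 0 : Finset Z ⊕ Fin (3 * Fintype.card Z + 1))}
              else 0 := (if_pos hactive0).symm
          _ ≤ _ := h
      unfold activeVotes
      exact le_trans hv0 h2
    have haP : activeVotes pref' P 4 P
        = activeVotes pref' P 4 C + activeVotes pref' P 4 R := by
      unfold activeVotes
      rw [hPdef]
      exact Finset.sum_union hdisjCR
    have hPpos : 0 < activeVotes pref' P 4 P := by omega
    have hq : activeVotes pref' P 4 P ≤ 2 * activeVotes pref' P 4 C := by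
      have hposQ : (0 : ℚ) < (activeVotes pref' P 4 P : ℚ) := by exact_mod_cast hPpos
      unfold activeFrac at hfrac
      rw [div_le_div_iff₀ (by norm_num) hposQ] at hfrac
      have hle : (activeVotes pref' P 4 P : ℚ) ≤ 2 * (activeVotes pref' P 4 C : ℚ) := by
        linarith
      exact_mod_cast hle
    have hkey : Fintype.card Z ≤ ∑ D ∈ A, D.card := by omega
    have hbUcard : ∑ D ∈ A, D.card = (A.biUnion id).card := (Finset.card_biUnion hAdisj).symm
    have hble : (A.biUnion id).card ≤ Fintype.card Z :=
      le_trans (Finset.card_le_univ _) (le_of_eq Finset.card_univ)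
    have huniv : A.biUnion id = Finset.univ := by
      apply Finset.eq_univ_of_card
      omega
    refine ⟨A, by rw [hAdef]; exact Finset.filter_subset _ _, hAdisj, ?_⟩
    intro z
    have hz : z ∈ A.biUnion id := by rw [huniv]; exact Finset.mem_univ z
    obtain ⟨D, hD, hzD⟩ := Finset.mem_biUnion.mp hz
    exact ⟨D, hD, hzD⟩
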